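/- Let L > 0 and let λ̃ ∈ ℂ be such that the polynomial μ³ + μ + λ̃ has a root of multiplicity at least two (i.e., there exists μ₀ ∈ ℂ with μ₀³ + μ₀ + λ̃ = 0 and 3μ₀² + 1 = 0). Suppose θ : ℝ → ℂ satisfies the KdV spectral ODE with parameter λ̃ on [0,L] and the boundary conditions θ(0) = 0, θ'(L) = 0, θ''(0) = 0, and θ''(L) = 0. Then θ(x) = 0 for all x ∈ [0,L]. -/

import Mathlib

open Complex Set

lemma constIcc_aux {f : ℝ → ℂ} {L : ℝ}
    (h : ∀ x ∈ Set.Icc (0:ℝ) L, HasDerivAt f 0 x) (hL : 0 ≤ L) :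
    ∀ x ∈ Set.Icc (0:ℝ) L, f x = f 0 := by
  intro x hx
  have h0 : (0:ℝ) ∈ Set.Icc (0:ℝ) L := ⟨le_refl _, hL⟩
  have h1 := (convex_Icc (0:ℝ) L).norm_image_sub_le_of_norm_hasDerivWithin_le
    (f' := fun _ => (0:ℂ)) (C := 0)
    (fun y hy => (h y hy).hasDerivWithinAt) (fun y _ => by simp) h0 hx
  rw [zero_mul] at h1
  exact sub_eq_zero.1 (by simpa using le_antisymm h1 (norm_nonneg _))

lemma hexp_aux (c : ℂ) (x : ℝ) :
    HasDerivAt (fun y : ℝ => Complex.exp (c * y)) (c * Complex.exp (c * x)) x := by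
  have h1 : HasDerivAt (fun z : ℂ => Complex.exp (c * z)) (c * Complex.exp (c * x)) (x : ℂ) := by
    simpa [mul_comm, Function.comp_def] using (Complex.hasDerivAt_exp (c * x)).comp (x:ℂ)
      ((hasDerivAt_id (x:ℂ)).const_mul c)
  exact h1.comp_ofReal

/-- A function `φ : ℝ → ℂ` satisfies the KdV spectral ODE with parameter `lam` on `[0, L]`:
it is three times continuously differentiable and `lam·φ + φ' + φ''' = 0` on `[0, L]`. -/
def KdVSpectralODE (lam : ℂ) (L : ℝ) (φ : ℝ → ℂ) : Prop :=
  ContDiff ℝ 3 φ ∧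
    ∀ x ∈ Set.Icc (0 : ℝ) L, lam * φ x + deriv φ x + iteratedDeriv 3 φ x = 0

theorem stmt13 (L : ℝ) (hL : 0 < L) (lam : ℂ)
    (hroot : ∃ μ₀ : ℂ, μ₀ ^ 3 + μ₀ + lam = 0 ∧ 3 * μ₀ ^ 2 + 1 = 0)
    (θ : ℝ → ℂ) (hode : KdVSpectralODE lam L θ)
    (hb0 : θ 0 = 0) (hb1 : deriv θ L = 0) (hb2 : iteratedDeriv 2 θ 0 = 0)
    (hb3 : iteratedDeriv 2 θ L = 0) :
    ∀ x ∈ Set.Icc (0 : ℝ) L, θ x = 0 := by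
  obtain ⟨m, hμ3, hμ2⟩ := hroot
  obtain ⟨hθ, hODE⟩ := hode
  have hdiff : ∀ k : ℕ, k < 3 → Differentiable ℝ (iteratedDeriv k θ) :=
    (contDiff_nat_iff_iteratedDeriv.1 (by exact_mod_cast hθ)).2
  have hd1 : ∀ x : ℝ, HasDerivAt θ (deriv θ x) x := by
    intro x
    have h := ((hdiff 0 (by norm_num)) x).hasDerivAt
    simpa [iteratedDeriv_zero] using h
  have hd2 : ∀ x : ℝ, HasDerivAt (deriv θ) (iteratedDeriv 2 θ x) x := by
    intro x
    have h := ((hdiff 1 (by norm_num)) x).hasDerivAt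
    have e1 : iteratedDeriv 1 θ = deriv θ := iteratedDeriv_one
    have e2 : iteratedDeriv 2 θ = deriv (iteratedDeriv 1 θ) := iteratedDeriv_succ
    rw [e1] at h e2
    rw [e2]
    exact h
  have hd3 : ∀ x : ℝ, HasDerivAt (iteratedDeriv 2 θ) (iteratedDeriv 3 θ x) x := by
    intro x
    have h := ((hdiff 2 (by norm_num)) x).hasDerivAt
    have e3 : iteratedDeriv 3 θ = deriv (iteratedDeriv 2 θ) := iteratedDeriv_succ
    rw [e3]
    exact h
  set a : ℂ := deriv θ 0 with ha
  -- Step A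
  have hgA : ∀ x ∈ Set.Icc (0:ℝ) L, HasDerivAt
      (fun y : ℝ => (iteratedDeriv 2 θ y - 2*m*deriv θ y + m^2*θ y) * Complex.exp ((2*m) * y))
      0 x := by
    intro x hx
    have hu : HasDerivAt (fun y : ℝ => iteratedDeriv 2 θ y - 2*m*deriv θ y + m^2*θ y)
        (iteratedDeriv 3 θ x - 2*m*iteratedDeriv 2 θ x + m^2*deriv θ x) x :=
      ((hd3 x).sub ((hd2 x).const_mul (2*m))).add ((hd1 x).const_mul (m^2))
    have h := hu.mul (hexp_aux (2*m) x)
    convert h using 1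
    · rfl
    · rfl
    have hox := hODE x hx
    set Q := Complex.exp ((2*m) * (x:ℝ)) with hQdef
    linear_combination (-Q)*hox + (Q*(deriv θ x) - Q*m*(θ x))*hμ2 + (Q*(θ x))*hμ3
  have hA : ∀ x ∈ Set.Icc (0:ℝ) L,
      (iteratedDeriv 2 θ x - 2*m*deriv θ x + m^2*θ x) * Complex.exp ((2*m) * x) = -2*m*a := by
    intro x hx
    rw [constIcc_aux hgA hL.le x hx]
    simp [hb0, hb2, ha]
  -- Step B
  have hgB : ∀ x ∈ Set.Icc (0:ℝ) L, HasDerivAt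
      (fun y : ℝ => (deriv θ y - m*θ y + (2*m^2*a) * Complex.exp ((-(2*m)) * y))
        * Complex.exp ((-m) * y)) 0 x := by
    intro x hx
    have hv : HasDerivAt (fun y : ℝ => deriv θ y - m*θ y + (2*m^2*a) * Complex.exp ((-(2*m)) * y))
        (iteratedDeriv 2 θ x - m*deriv θ x + (2*m^2*a) * ((-(2*m)) * Complex.exp ((-(2*m)) * x))) x :=
      ((hd2 x).sub ((hd1 x).const_mul m)).add ((hexp_aux (-(2*m)) x).const_mul (2*m^2*a))
    have h := hv.mul (hexp_aux (-m) x)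
    convert h using 1
    · rfl
    · rfl
    have hAx := hA x hx
    have hP : Complex.exp ((2*m) * (x:ℝ)) * Complex.exp ((-(2*m)) * (x:ℝ)) = 1 := by
      rw [← Complex.exp_add]; norm_num
    set Q := Complex.exp ((2*m) * (x:ℝ)) with hQdef
    set P2 := Complex.exp ((-(2*m)) * (x:ℝ)) with hP2def
    set P1 := Complex.exp ((-m) * (x:ℝ)) with hP1def
    linear_combination (P1*(iteratedDeriv 2 θ x - 2*m*deriv θ x + m^2*θ x))*hP
      + (-P1*P2)*hAx + (2*m*a*P2*P1)*hμ2
  have hB : ∀ x ∈ Set.Icc (0:ℝ) L,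
      (deriv θ x - m*θ x + (2*m^2*a) * Complex.exp ((-(2*m)) * x)) * Complex.exp ((-m) * x)
        = a + 2*m^2*a := by
    intro x hx
    rw [constIcc_aux hgB hL.le x hx]
    simp [hb0, ha]
  -- Step C
  have hgC : ∀ x ∈ Set.Icc (0:ℝ) L, HasDerivAt
      (fun y : ℝ => (θ y - (a + 2*m^2*a) * y * Complex.exp (m * y)
        - (2*m*a/3) * Complex.exp ((-(2*m)) * y)) * Complex.exp ((-m) * y)) 0 x := by
    intro x hx
    have hid : HasDerivAt (fun y : ℝ => (y : ℂ)) 1 x := by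
      simpa using (hasDerivAt_id (x:ℂ)).comp_ofReal
    have hxe : HasDerivAt (fun y : ℝ => (a + 2*m^2*a) * y * Complex.exp (m * y))
        ((a + 2*m^2*a) * (1 * Complex.exp (m * x) + x * (m * Complex.exp (m * x)))) x := by
      have h := (hid.mul (hexp_aux m x)).const_mul (a + 2*m^2*a)
      convert h using 1
      · rfl
      · funext y; simp only [Pi.mul_apply]; ring
    have hin : HasDerivAt (fun y : ℝ => θ y - (a + 2*m^2*a) * y * Complex.exp (m * y)
        - (2*m*a/3) * Complex.exp ((-(2*m)) * y))
        (deriv θ x - (a + 2*m^2*a) * (1 * Complex.exp (m * x) + x * (m * Complex.exp (m * x)))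
          - (2*m*a/3) * ((-(2*m)) * Complex.exp ((-(2*m)) * x))) x :=
      ((hd1 x).sub hxe).sub ((hexp_aux (-(2*m)) x).const_mul (2*m*a/3))
    have h := hin.mul (hexp_aux (-m) x)
    convert h using 1
    · rfl
    · rfl
    have hBx := hB x hx
    have hPe : Complex.exp ((-m) * (x:ℝ)) * Complex.exp (m * (x:ℝ)) = 1 := by
      rw [← Complex.exp_add]; norm_num
    set e := Complex.exp (m * (x:ℝ)) with hedef
    set P2 := Complex.exp ((-(2*m)) * (x:ℝ)) with hP2def
    set P1 := Complex.exp ((-m) * (x:ℝ)) with hP1def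
    linear_combination (-P1*e)*hBx
      + (P1*(deriv θ x - m*θ x + (2*m^2*a)*P2))*hPe
  have hC : ∀ x ∈ Set.Icc (0:ℝ) L,
      (θ x - (a + 2*m^2*a) * x * Complex.exp (m * x)
        - (2*m*a/3) * Complex.exp ((-(2*m)) * x)) * Complex.exp ((-m) * x) = -(2*m*a/3) := by
    intro x hx
    rw [constIcc_aux hgC hL.le x hx]
    simp [hb0, ha]
  -- Boundary at L
  have hLmem : (L:ℝ) ∈ Set.Icc (0:ℝ) L := ⟨hL.le, le_refl _⟩
  have EA := hA L hLmem
  have EB := hB L hLmem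
  have EC := hC L hLmem
  rw [hb1, hb3] at EA
  rw [hb1] at EB
  set t : ℂ := θ L with ht
  set P : ℂ := Complex.exp (m * (L:ℝ)) with hP
  have hPne : P ≠ 0 := Complex.exp_ne_zero _
  have hQ : Complex.exp ((2*m) * (L:ℝ)) = P * P := by
    rw [hP, ← Complex.exp_add]; ring_nf
  have hP1 : Complex.exp ((-m) * (L:ℝ)) = P⁻¹ := by
    rw [hP, ← Complex.exp_neg]; ring_nf
  have hP2 : Complex.exp ((-(2*m)) * (L:ℝ)) = (P*P)⁻¹ := by
    rw [← hQ, ← Complex.exp_neg]; ring_nf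
  rw [hQ] at EA
  rw [hP1, hP2] at EB EC
  -- now show a = 0
  have ha0 : a = 0 := by
    by_contra hane
    have h1 : t * (P*P) = 6*m*a := by
      field_simp at EA
      linear_combination (-3)*EA + (t*(P*P))*hμ2
    field_simp at EB EC
    have h2 : a*(P*P*P) = 4*a := by
      linear_combination (-3)*EB + (-3*m)*h1 + (-2*a*(P*P*P) - 4*a)*hμ2
    have h4 : a * ((L:ℂ) - 6*m) = 0 := by
      linear_combination (-1/4 : ℂ)*EC + (3/4 : ℂ)*h1
        + (-(a*(L:ℂ)*(P*P*P))/2)*hμ2 + ((m/2) - (L:ℂ)/4)*h2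
    have h5 : (L:ℂ) - 6*m = 0 := (mul_eq_zero.1 h4).resolve_left hane
    have h6 : ((L:ℂ))^2 = -12 := by
      linear_combination ((L:ℂ)+6*m)*h5 + 12*hμ2
    have h7 : (L^2 : ℝ) = -12 := by exact_mod_cast h6
    nlinarith [sq_nonneg L]
  -- conclude
  intro x hx
  have hCx := hC x hx
  rw [ha0] at hCx
  have h0 : θ x * Complex.exp ((-m) * x) = 0 := by
    simpa using hCx
  exact (mul_eq_zero.1 h0).resolve_right (Complex.exp_ne_zero _)
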